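/- Let f: ℕ → ℕ be given on positive integers n by f(n) = C(2n, n) (the central binomial coefficient). Then the number of orbits of the cyclic group Z/n acting by rotation on the set of ordered forests of full binary plane trees with n total leaves equals (1/(2n)) Σ_{d|n} φ(n/d) C(2d, d). -/

import Mathlib

/-- A full binary plane tree: every internal node has exactly two ordered children. -/
inductive FullBinTree : Type
  | leaf : FullBinTree
  | node : FullBinTree → FullBinTree → FullBinTree

/-- The number of leaves of a full binary plane tree. -/
def FullBinTree.numLeaves : FullBinTree → ℕ
  | .leaf => 1
  | .node l r => l.numLeaves + r.numLeaves

namespace Stmt10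
open List

def bal (w : List Bool) : ℤ := (w.count true : ℤ) - (w.count false : ℤ)

@[simp] lemma bal_nil : bal [] = 0 := rfl

lemma bal_append (a b : List Bool) : bal (a ++ b) = bal a + bal b := by
  simp [bal, count_append]; ring

lemma bal_cons (b : Bool) (w : List Bool) : bal (b :: w) = (if b then 1 else -1) + bal w := by
  cases b <;> simp [bal, count_cons] <;> ring

def Dyck (w : List Bool) : Prop := ∀ p, p <+: w → 0 ≤ bal p

lemma Dyck.nil : Dyck [] := by rintro p ⟨r, hr⟩; simp at hr; simp [hr]

lemma bal_singleton (b : Bool) : bal [b] = if b then 1 else -1 := by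
  cases b <;> simp [bal]

lemma prefix_append_cases {p a b : List Bool} (h : p <+: a ++ b) :
    p <+: a ∨ ∃ q, q <+: b ∧ p = a ++ q := by
  rcases h with ⟨r, hr⟩
  rcases List.append_eq_append_iff.1 hr with ⟨a', ha, _⟩ | ⟨c', hc, hd⟩
  · exact Or.inl ⟨a', ha.symm⟩
  · exact Or.inr ⟨c', ⟨r, hd.symm⟩, hc⟩

lemma Dyck.bal_nonneg {w : List Bool} (h : Dyck w) : 0 ≤ bal w := h w (prefix_refl w)

lemma Dyck.append {a b : List Bool} (ha : Dyck a) (hb : Dyck b) : Dyck (a ++ b) := by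
  intro p hp
  rcases prefix_append_cases hp with h | ⟨q, hq, rfl⟩
  · exact ha p h
  · rw [bal_append]
    exact add_nonneg ha.bal_nonneg (hb q hq)

/-- encoding of the tree as a Dyck word (length `2*(numLeaves-1)`). -/
def inn : FullBinTree → List Bool
  | .leaf => []
  | .node l r => (true :: (inn l ++ [false])) ++ inn r

/-- encoding as a primitive Dyck word of length `2*numLeaves`. -/
def code (t : FullBinTree) : List Bool := true :: (inn t ++ [false])

lemma inn_node (l r : FullBinTree) : inn (.node l r) = code l ++ inn r := rfl

@[simp] lemma count_true_inn (t : FullBinTree) : (inn t).count true + 1 = t.numLeaves := by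
  induction t with
  | leaf => simp [inn, FullBinTree.numLeaves]
  | node l r ihl ihr =>
    simp [inn, count_append, count_cons, FullBinTree.numLeaves]
    omega

@[simp] lemma count_false_inn (t : FullBinTree) : (inn t).count false + 1 = t.numLeaves := by
  induction t with
  | leaf => simp [inn, FullBinTree.numLeaves]
  | node l r ihl ihr =>
    simp [inn, count_append, count_cons, FullBinTree.numLeaves]
    omega

lemma bal_inn (t : FullBinTree) : bal (inn t) = 0 := by
  have h1 := count_true_inn t; have h2 := count_false_inn t
  simp only [bal]; omega

lemma bal_code (t : FullBinTree) : bal (code t) = 0 := by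
  have := bal_inn t
  simp [code, bal_cons, bal_append, this, bal]

lemma dyck_wrap {u : List Bool} (hu : Dyck u) (hb : bal u = 0) :
    Dyck (true :: (u ++ [false])) := by
  intro p hp
  rcases hp with ⟨s, hs⟩
  rcases p with _ | ⟨b, q⟩
  · simp
  · have hs' : b :: (q ++ s) = true :: (u ++ [false]) := by simpa using hs
    have hbb : b = true := by injection hs'
    have hqs : q ++ s = u ++ [false] := by injection hs'
    subst hbb
    have hq : q <+: u ++ [false] := ⟨s, hqs⟩
    rcases prefix_append_cases hq with h | ⟨q', hq', rfl⟩
    · have := hu q h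
      rw [bal_cons]; simp; linarith
    · have : q' = [] ∨ q' = [false] := by
        rcases hq' with ⟨v, hv⟩
        rcases q' with _ | ⟨c, q''⟩
        · exact Or.inl rfl
        · right
          simp at hv
          simp [hv.1, hv.2.1]
      rcases this with rfl | rfl
      · rw [bal_cons]; simp; linarith [hu u (prefix_refl u)]
      · rw [bal_cons, bal_append, hb]
        simp [bal]

lemma dyck_inn (t : FullBinTree) : Dyck (inn t) := by
  induction t with
  | leaf => exact Dyck.nil
  | node l r ihl ihr =>
    rw [inn_node]
    exact Dyck.append (dyck_wrap ihl (bal_inn l)) ihr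

lemma dyck_code (t : FullBinTree) : Dyck (code t) :=
  dyck_wrap (dyck_inn t) (bal_inn t)

/-- primitivity: proper nonempty prefixes of `code t` have positive balance. -/
lemma bal_pos_of_prefix_code {t : FullBinTree} {p : List Bool} (h : p <+: code t)
    (h0 : p ≠ []) (h1 : p ≠ code t) : 1 ≤ bal p := by
  rcases h with ⟨s, hs⟩
  rcases p with _ | ⟨b, q⟩
  · exact absurd rfl h0
  · have hs' : b :: (q ++ s) = true :: (inn t ++ [false]) := by simpa [code] using hs
    have hbb : b = true := by injection hs'
    have hqs : q ++ s = inn t ++ [false] := by injection hs'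
    subst hbb
    have hq : q <+: inn t ++ [false] := ⟨s, hqs⟩
    have hq2 : q <+: inn t := by
      rcases prefix_append_cases hq with h | ⟨q', hq', rfl⟩
      · exact h
      · rcases hq' with ⟨v, hv⟩
        rcases q' with _ | ⟨c, q''⟩
        · simp
        · exfalso
          apply h1
          simp at hv
          simp [code, hv.1, hv.2.1]
    have := dyck_inn t q hq2
    rw [bal_cons]; simp; linarith


lemma count_true_add_count_false (w : List Bool) : w.count true + w.count false = w.length := by
  induction w with
  | nil => simp
  | cons b w ih => cases b <;> simp [count_cons] <;> omega

/-- The key splitting surgery on a nonempty balanced Dyck word. -/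
lemma exists_split {w : List Bool} (hd : Dyck w) (hb : bal w = 0) (hne : w ≠ []) :
    ∃ u w', w = (true :: (u ++ [false])) ++ w' ∧ Dyck u ∧ bal u = 0 ∧ Dyck w' ∧ bal w' = 0 ∧
      u.length + 2 + w'.length = w.length := by
  have hlen : 1 ≤ w.length := List.length_pos_iff.2 hne
  classical
  have hex : ∃ i, 1 ≤ i ∧ bal (w.take i) = 0 := ⟨w.length, hlen, by simpa using hb⟩
  obtain ⟨i0, ⟨hi1, hibal⟩, hmin'⟩ :
      ∃ i, (1 ≤ i ∧ bal (w.take i) = 0) ∧ ∀ j < i, ¬(1 ≤ j ∧ bal (w.take j) = 0) :=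
    ⟨Nat.find hex, Nat.find_spec hex, fun j hj => Nat.find_min hex hj⟩
  have hmin : ∀ j, 1 ≤ j → j < i0 → 1 ≤ bal (w.take j) := by
    intro j h1 h2
    have hge : 0 ≤ bal (w.take j) := hd _ (take_prefix j w)
    have : bal (w.take j) ≠ 0 := fun h => hmin' j h2 ⟨h1, h⟩
    omega
  have hile : i0 ≤ w.length := by
    by_contra hcon
    exact hmin' w.length (by omega) ⟨hlen, by simpa using hb⟩
  -- head of w is true
  obtain ⟨b, v, rfl⟩ : ∃ b v, w = b :: v := by
    rcases w with _ | ⟨b, v⟩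
    · exact absurd rfl hne
    · exact ⟨_, _, rfl⟩
  have hbtrue : b = true := by
    have := hd [b] ⟨v, rfl⟩
    cases b
    · simp [bal] at this
    · rfl
  subst hbtrue
  have hi2 : 2 ≤ i0 := by
    rcases Nat.lt_or_ge i0 2 with h | h
    · have h1 : i0 = 1 := by omega
      rw [h1] at hibal
      simp [bal] at hibal
    · exact h
  -- decompose take i0 w
  have hile' : i0 ≤ v.length + 1 := by simpa using hile
  have hlt : i0 - 1 < (true :: v).length := by simp; omega
  have htc0 := List.take_concat_get (l := true :: v) (i := i0 - 1) hlt
  rw [Nat.sub_add_cancel (by omega : 1 ≤ i0)] at htc0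
  have htc : (true :: v).take (i0 - 1) ++ [(true :: v).get ⟨i0 - 1, hlt⟩]
      = (true :: v).take i0 := by
    simpa [List.concat_eq_append, List.get_eq_getElem] using htc0
  have hbal1 : 1 ≤ bal ((true :: v).take (i0 - 1)) := hmin _ (by omega) (by omega)
  have h2 := congrArg bal htc
  rw [bal_append, hibal] at h2
  have hcfalse : (true :: v).get ⟨i0 - 1, hlt⟩ = false := by
    cases hcv : (true :: v).get ⟨i0 - 1, hlt⟩
    · rfl
    · rw [hcv, bal_singleton] at h2; simp at h2; linarith
  set u := v.take (i0 - 2) with hu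
  have htake1 : (true :: v).take (i0 - 1) = true :: u := by
    have h9 : i0 - 1 = (i0 - 2) + 1 := by omega
    rw [hu, h9, List.take_succ_cons]
  have hp : (true :: v).take i0 = (true :: (u ++ [false])) := by
    rw [← htc, htake1, hcfalse]; simp
  refine ⟨u, (true :: v).drop i0, ?_, ?_, ?_, ?_, ?_, ?_⟩
  · rw [← hp, take_append_drop]
  · -- Dyck u
    intro r hr
    have hpre : true :: r <+: true :: v := by
      have h1 : true :: r <+: true :: u := by
        rw [List.cons_prefix_cons]; exact ⟨rfl, hr⟩
      calc true :: r <+: true :: u := h1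
        _ <+: true :: v := htake1 ▸ take_prefix _ _
    have heq : (true :: v).take (r.length + 1) = true :: r := (prefix_iff_eq_take.1 hpre).symm
    have hlenr : r.length ≤ u.length := hr.length_le
    have hulen : u.length ≤ i0 - 2 := by rw [hu]; exact (length_take_le _ _)
    have h1 : 1 ≤ bal ((true :: v).take (r.length + 1)) := hmin _ (by omega) (by omega)
    rw [heq, bal_cons] at h1
    simp at h1; linarith
  · -- bal u = 0
    have h3 := congrArg bal hp
    rw [hibal, bal_cons, bal_append, bal_singleton] at h3
    simp at h3; linarith
  · -- Dyck w'
    intro r hr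
    have hpr : (true :: v).take i0 ++ r <+: (true :: v) := by
      rcases hr with ⟨s, hs⟩
      exact ⟨s, by rw [append_assoc, hs, take_append_drop]⟩
    have h4 := hd _ hpr
    rw [bal_append, hibal] at h4
    simpa using h4
  · -- bal w' = 0
    have h5 := congrArg bal ((take_append_drop i0 (true :: v)).symm)
    rw [bal_append, hibal] at h5
    omega
  · have h6 : u.length + 2 = i0 := by
      have := congrArg List.length hp
      simp [length_take] at this
      omega
    have h7 : ((true :: v).drop i0).length = (true :: v).length - i0 := by simp
    omega

lemma inn_surj_aux (n : ℕ) : ∀ w : List Bool, w.length ≤ n → Dyck w → bal w = 0 →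
    ∃ t, inn t = w := by
  induction n with
  | zero =>
    intro w hw _ _
    have : w = [] := by cases w; rfl; simp at hw
    exact ⟨.leaf, by simp [inn, this]⟩
  | succ n ih =>
    intro w hw hd hb
    rcases eq_or_ne w [] with rfl | hne
    · exact ⟨.leaf, rfl⟩
    obtain ⟨u, w', rfl, hdu, hbu, hdw, hbw, hlen⟩ := exists_split hd hb hne
    obtain ⟨l, hl⟩ := ih u (by simp at hw ⊢; omega) hdu hbu
    obtain ⟨r, hr⟩ := ih w' (by simp at hw ⊢; omega) hdw hbw
    exact ⟨.node l r, by rw [inn_node, code, hl, hr]⟩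

def fenc (F : List FullBinTree) : List Bool := (F.map code).flatten

@[simp] lemma fenc_nil : fenc [] = [] := rfl
@[simp] lemma fenc_cons (t : FullBinTree) (F : List FullBinTree) :
    fenc (t :: F) = code t ++ fenc F := rfl
lemma fenc_append (F G : List FullBinTree) : fenc (F ++ G) = fenc F ++ fenc G := by
  simp [fenc]

lemma count_true_code (t : FullBinTree) : (code t).count true = t.numLeaves := by
  have := count_true_inn t
  simp [code, count_cons, count_append]

lemma count_false_code (t : FullBinTree) : (code t).count false = t.numLeaves := by
  have := count_false_inn t
  simp [code, count_cons, count_append]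

lemma length_code (t : FullBinTree) : (code t).length = 2 * t.numLeaves := by
  have h := count_true_add_count_false (code t)
  rw [count_true_code, count_false_code] at h; omega

lemma count_true_fenc (F : List FullBinTree) :
    (fenc F).count true = (F.map FullBinTree.numLeaves).sum := by
  induction F with
  | nil => simp
  | cons t F ih => simp [count_append, ih, count_true_code]

lemma count_false_fenc (F : List FullBinTree) :
    (fenc F).count false = (F.map FullBinTree.numLeaves).sum := by
  induction F with
  | nil => simp
  | cons t F ih => simp [count_append, ih, count_false_code]

lemma length_fenc (F : List FullBinTree) :
    (fenc F).length = 2 * (F.map FullBinTree.numLeaves).sum := by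
  have h := count_true_add_count_false (fenc F)
  rw [count_true_fenc, count_false_fenc] at h; omega

lemma bal_fenc (F : List FullBinTree) : bal (fenc F) = 0 := by
  simp [bal, count_true_fenc, count_false_fenc]

lemma dyck_fenc (F : List FullBinTree) : Dyck (fenc F) := by
  induction F with
  | nil => exact Dyck.nil
  | cons t F ih => exact Dyck.append (dyck_code t) ih

lemma code_ne_nil (t : FullBinTree) : code t ≠ [] := by simp [code]

lemma fenc_surj_aux (n : ℕ) : ∀ w : List Bool, w.length ≤ n → Dyck w → bal w = 0 → w ≠ [] →
    ∃ F, F ≠ [] ∧ fenc F = w := by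
  induction n with
  | zero =>
    intro w hw _ _ hne
    rcases w with _ | ⟨b, v⟩
    · exact absurd rfl hne
    · simp at hw
  | succ n ih =>
    intro w hw hd hb hne
    obtain ⟨u, w', rfl, hdu, hbu, hdw, hbw, hlen⟩ := exists_split hd hb hne
    obtain ⟨l, hl⟩ := inn_surj_aux u.length u le_rfl hdu hbu
    rcases eq_or_ne w' [] with rfl | hne'
    · exact ⟨[l], by simp, by simp [code, hl]⟩
    · obtain ⟨F, hF, hFw⟩ := ih w' (by simp at hw ⊢; omega) hdw hbw hne'
      exact ⟨l :: F, by simp, by simp [code, hl, hFw]⟩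

lemma code_eq_of_append_eq {t t' : FullBinTree} {a b : List Bool}
    (h : code t ++ a = code t' ++ b) : code t = code t' := by
  have key : ∀ (s s' : FullBinTree) (c d : List Bool), code s ++ c = code s' ++ d →
      (code s).length ≤ (code s').length → code s = code s' := by
    intro s s' c d hh hle
    have hpre : code s <+: code s' := by
      have : code s = (code s' ++ d).take (code s).length := by
        rw [← hh, take_append]
        simp
      rw [take_append, Nat.sub_eq_zero_of_le hle] at this
      simp at this
      rw [this]
      exact take_prefix _ _
    by_contra hne
    have := bal_pos_of_prefix_code hpre (code_ne_nil s) hne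
    rw [bal_code] at this; omega
  rcases le_total (code t).length (code t').length with hle | hle
  · exact key t t' a b h hle
  · exact (key t' t b a h.symm hle).symm

lemma inn_inj : ∀ t t' : FullBinTree, inn t = inn t' → t = t' := by
  intro t
  induction t with
  | leaf =>
    intro t' h
    cases t' with
    | leaf => rfl
    | node l r =>
      rw [inn_node] at h
      exact absurd h.symm (by simp [code, inn])
  | node l r ihl ihr =>
    intro t' h
    cases t' with
    | leaf =>
      rw [inn_node] at h
      exact absurd h (by simp [code, inn])
    | node l' r' =>
      rw [inn_node, inn_node] at h
      have hc : code l = code l' := code_eq_of_append_eq h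
      have hr : inn r = inn r' := by
        rw [hc] at h
        exact append_cancel_left h
      have hl : inn l = inn l' := by simpa [code] using hc
      rw [ihl l' hl, ihr r' hr]

lemma code_inj {t t' : FullBinTree} (h : code t = code t') : t = t' :=
  inn_inj _ _ (by simpa [code] using h)

lemma fenc_inj : ∀ F F' : List FullBinTree, fenc F = fenc F' → F = F' := by
  intro F
  induction F with
  | nil =>
    intro F' h
    cases F' with
    | nil => rfl
    | cons t G => exact absurd h.symm (by simp [code])
  | cons t G ih =>
    intro F' h
    cases F' with
    | nil => exact absurd h (by simp [code])
    | cons t' G' =>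
      simp only [fenc_cons] at h
      have hc : code t = code t' := code_eq_of_append_eq h
      rw [hc] at h
      rw [code_inj hc, ih G' (append_cancel_left h)]

lemma fenc_rotate (F : List FullBinTree) (c : ℕ) (hc : c ≤ F.length) :
    fenc (F.rotate c) = (fenc F).rotate (fenc (F.take c)).length := by
  have h1 : F.rotate c = F.drop c ++ F.take c := rotate_eq_drop_append_take hc
  have h2 : fenc F = fenc (F.take c) ++ fenc (F.drop c) := by
    rw [← fenc_append, take_append_drop]
  rw [h1, fenc_append, h2, rotate_append_length_eq]

lemma boundary (F : List FullBinTree) (j : ℕ) (hj : j ≤ (fenc F).length)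
    (hb : bal ((fenc F).take j) = 0) : ∃ c ≤ F.length, j = (fenc (F.take c)).length := by
  induction F generalizing j with
  | nil =>
    simp at hj
    exact ⟨0, by simp, by simp [hj]⟩
  | cons t G ih =>
    rcases eq_or_ne j 0 with rfl | hj0
    · exact ⟨0, by simp, by simp⟩
    rcases Nat.lt_or_ge j (code t).length with hlt | hge
    · exfalso
      rw [fenc_cons, take_append, Nat.sub_eq_zero_of_le hlt.le,
        take_zero, append_nil] at hb
      have hpre : (code t).take j <+: code t := take_prefix _ _
      have hlen3 : ((code t).take j).length = j := by
        rw [length_take]; omega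
      have hne : (code t).take j ≠ [] := by
        intro h; rw [h] at hlen3; simp at hlen3; omega
      have hne2 : (code t).take j ≠ code t := by
        intro h; rw [h] at hlen3; omega
      have := bal_pos_of_prefix_code hpre hne hne2
      omega
    · rw [fenc_cons, take_append, take_of_length_le hge, bal_append,
        bal_code] at hb
      simp at hb
      have hj2 : j - (code t).length ≤ (fenc G).length := by
        rw [fenc_cons, length_append] at hj
        omega
      obtain ⟨c, hc, hcl⟩ := ih (j - (code t).length) hj2 hb
      refine ⟨c + 1, by simp; omega, ?_⟩
      have : (t :: G).take (c + 1) = t :: G.take c := by simp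
      rw [this, fenc_cons, length_append]
      omega

lemma bal_take_of_rotate_dyck {w : List Bool} {j : ℕ} (hw : Dyck w) (hb : bal w = 0)
    (hj : j ≤ w.length) (hd : Dyck (w.rotate j)) : bal (w.take j) = 0 := by
  have h1 : w.rotate j = w.drop j ++ w.take j := rotate_eq_drop_append_take hj
  have h2 : 0 ≤ bal (w.drop j) := hd _ (h1 ▸ ⟨w.take j, h1.symm ▸ rfl⟩)
  have h3 : bal (w.take j) + bal (w.drop j) = 0 := by
    rw [← bal_append, take_append_drop, hb]
  have h4 : 0 ≤ bal (w.take j) := hw _ (take_prefix _ _)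
  omega

lemma exists_rotate_dyck {w : List Bool} (hb : bal w = 0) :
    ∃ j ≤ w.length, Dyck (w.rotate j) := by
  obtain ⟨j, hjmem, hjmin⟩ := Finset.exists_min_image (Finset.range (w.length + 1))
    (fun i => bal (w.take i)) ⟨0, by simp⟩
  rw [Finset.mem_range] at hjmem
  have hjle : j ≤ w.length := by omega
  refine ⟨j, hjle, ?_⟩
  have hrot : w.rotate j = w.drop j ++ w.take j := rotate_eq_drop_append_take hjle
  rw [hrot]
  intro p hp
  rcases prefix_append_cases hp with h | ⟨q, hq, rfl⟩
  · -- take j w ++ p is a prefix of w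
    have hpre : w.take j ++ p <+: w := by
      rcases h with ⟨s, hs⟩
      exact ⟨s, by rw [append_assoc, hs, take_append_drop]⟩
    have hlen : (w.take j ++ p).length ≤ w.length := hpre.length_le
    rw [length_append, length_take, min_eq_left hjle] at hlen
    have heq : w.take (j + p.length) = w.take j ++ p := by
      have h5 := prefix_iff_eq_take.1 hpre
      rw [length_append, length_take, min_eq_left hjle] at h5
      exact h5.symm
    have h6 := hjmin (j + p.length) (by rw [Finset.mem_range]; omega)
    rw [heq, bal_append] at h6
    omega
  · -- p = drop j w ++ q with q <+: take j w
    have hq2 : q <+: w := hq.trans (take_prefix _ _)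
    have hql : q.length ≤ j := by
      have := hq.length_le
      rw [length_take] at this
      omega
    have heq : q = w.take q.length := prefix_iff_eq_take.1 hq2
    have h6 := hjmin q.length (by rw [Finset.mem_range]; omega)
    rw [← heq] at h6
    have h7 : bal (w.take j) + bal (w.drop j) = 0 := by
      rw [← bal_append, take_append_drop, hb]
    rw [bal_append]
    omega

/-! ### Word side -/

def Wd (n : ℕ) : Type := {w : List Bool // w.length = 2 * n ∧ w.count true = n}

instance nz2 (n : ℕ) [NeZero n] : NeZero (2 * n) := ⟨by have := NeZero.ne n; omega⟩

instance wdAction (n : ℕ) [NeZero n] : AddAction (ZMod (2 * n)) (Wd n) where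
  vadd k w := ⟨w.1.rotate k.val, by
    obtain ⟨hl, hc⟩ := w.2
    exact ⟨by simp [hl], by rw [(List.rotate_perm w.1 k.val).count_eq, hc]⟩⟩
  zero_vadd w := by
    apply Subtype.ext
    show w.1.rotate (ZMod.val 0) = w.1
    simp
  add_vadd a b w := by
    apply Subtype.ext
    show w.1.rotate ((a + b).val) = (w.1.rotate b.val).rotate a.val
    have h := (List.rotate_mod w.1 (b.val + a.val)).symm
    rw [List.rotate_rotate, ZMod.val_add, h, w.2.1, Nat.add_comm]

lemma vadd_def (n : ℕ) [NeZero n] (a : ZMod (2 * n)) (w : Wd n) :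
    (a +ᵥ w).1 = w.1.rotate a.val := rfl

lemma rotate_fix_mul {w : List Bool} {j : ℕ} (h : w.rotate j = w) (t : ℕ) :
    w.rotate (j * t) = w := by
  induction t with
  | zero => simp
  | succ t ih => rw [Nat.mul_succ, ← List.rotate_rotate, ih, h]

lemma rotate_fix_gcd {w : List Bool} {j : ℕ} (hne : w ≠ []) (h : w.rotate j = w) :
    w.rotate (Nat.gcd j w.length) = w := by
  have hL0 : w.length ≠ 0 := (List.length_pos_iff.2 hne).ne'
  haveI : NeZero w.length := ⟨hL0⟩
  set x : ZMod w.length := ((Nat.gcdA j w.length : ℤ) : ZMod w.length) with hx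
  have hcast : ((Nat.gcd j w.length : ℕ) : ZMod w.length) = (j : ZMod w.length) * x := by
    have hbz := Nat.gcd_eq_gcd_ab j w.length
    have h2 : ((Nat.gcd j w.length : ℤ) : ZMod w.length)
        = (((j : ℤ) * Nat.gcdA j w.length + (w.length : ℤ) * Nat.gcdB j w.length : ℤ) :
            ZMod w.length) := by
      exact_mod_cast congrArg (fun z : ℤ => ((z : ℤ) : ZMod w.length)) hbz
    push_cast at h2
    rw [ZMod.natCast_self] at h2
    simpa using h2
  have hmod : (j * x.val) ≡ Nat.gcd j w.length [MOD w.length] := by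
    rw [← ZMod.natCast_eq_natCast_iff]
    push_cast
    rw [ZMod.natCast_rightInverse x, hcast]
  have hmod' : (j * x.val) % w.length = Nat.gcd j w.length % w.length := hmod
  have h1 : w.rotate (j * x.val) = w := rotate_fix_mul h _
  calc w.rotate (Nat.gcd j w.length) = w.rotate (Nat.gcd j w.length % w.length) :=
        (List.rotate_mod _ _).symm
    _ = w.rotate ((j * x.val) % w.length) := by rw [hmod']
    _ = w.rotate (j * x.val) := List.rotate_mod _ _
    _ = w := h1

lemma flatten_replicate_comm (m : ℕ) (u : List Bool) :
    u ++ (List.replicate m u).flatten = (List.replicate m u).flatten ++ u := by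
  induction m with
  | zero => simp
  | succ m ih =>
    rw [List.replicate_succ, List.flatten_cons, List.append_assoc, ← ih]

lemma length_flatten_replicate (m : ℕ) (u : List Bool) :
    (List.replicate m u).flatten.length = m * u.length := by
  simp [List.length_flatten, List.map_replicate, List.sum_replicate, smul_eq_mul]

lemma count_flatten_replicate (m : ℕ) (u : List Bool) (b : Bool) :
    (List.replicate m u).flatten.count b = m * u.count b := by
  induction m with
  | zero => simp
  | succ m ih =>
    rw [List.replicate_succ, List.flatten_cons, List.count_append, ih, Nat.succ_mul]
    omega

lemma rotate_flatten_replicate (m : ℕ) (u : List Bool) :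
    (List.replicate m u).flatten.rotate u.length = (List.replicate m u).flatten := by
  cases m with
  | zero => simp
  | succ m =>
    rw [List.replicate_succ, List.flatten_cons, rotate_append_length_eq,
      ← flatten_replicate_comm, ← List.flatten_cons, ← List.replicate_succ]

lemma periodic_structure : ∀ (m : ℕ) (w : List Bool) (g : ℕ), 0 < g → w.length = g * m →
    w.rotate g = w → w = (List.replicate m (w.take g)).flatten := by
  intro m
  induction m with
  | zero =>
    intro w g _ hlen _
    simp only [List.replicate, List.flatten_nil]
    exact List.eq_nil_of_length_eq_zero (by omega)
  | succ m ih =>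
    intro w g hg hlen hfix
    have hmul : g * (m + 1) = g * m + g := by ring
    have hgle : g ≤ w.length := by omega
    have hsplit : w.drop g ++ w.take g = w := by
      rw [← rotate_eq_drop_append_take hgle, hfix]
    have hsplit2 : w.take g ++ w.drop g = w := take_append_drop g w
    have hkey : w.drop g ++ w.take g = w.take g ++ w.drop g := by rw [hsplit, hsplit2]
    have hdlen : (w.drop g).length = g * m := by rw [List.length_drop]; omega
    have htklen : (w.take g).length = g := by rw [length_take]; omega
    rcases Nat.eq_zero_or_pos m with rfl | hm
    · have hnil : w.drop g = [] := List.eq_nil_of_length_eq_zero (by omega)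
      rw [← hsplit2, hnil, append_nil]
      simp
    · have htlen : g ≤ (w.drop g).length := by
        have := Nat.le_mul_of_pos_right g hm
        omega
      have htake : (w.drop g).take g = w.take g := by
        have h1 : (w.drop g ++ w.take g).take g = (w.drop g).take g := by
          rw [take_append, Nat.sub_eq_zero_of_le htlen, take_zero, append_nil]
        have h2 : (w.take g ++ w.drop g).take g = w.take g := List.take_left' htklen
        rw [hkey, h2] at h1
        exact h1.symm
      have hrot : (w.drop g).rotate g = w.drop g := by
        rw [rotate_eq_drop_append_take htlen, htake]
        have h1 : (w.drop g ++ w.take g).drop g = (w.drop g).drop g ++ w.take g := by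
          rw [drop_append, Nat.sub_eq_zero_of_le htlen, drop_zero]
        have h2 : (w.take g ++ w.drop g).drop g = w.drop g := List.drop_left' htklen
        rw [hkey, h2] at h1
        exact h1.symm
      have hIH := ih (w.drop g) g hg hdlen hrot
      rw [htake] at hIH
      rw [List.replicate_succ, List.flatten_cons, ← hIH, hsplit2]

lemma take_flatten_replicate {m : ℕ} (hm : 0 < m) (u : List Bool) :
    ((List.replicate m u).flatten).take u.length = u := by
  obtain ⟨k, rfl⟩ : ∃ k, m = k + 1 := ⟨m - 1, by omega⟩
  rw [List.replicate_succ, List.flatten_cons, List.take_left]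

lemma card_fixed_generic (n : ℕ) [NeZero n] (a : ZMod (2 * n)) (g m : ℕ)
    (hg : g = Nat.gcd a.val (2 * n)) (hm : m = (2 * n) / g) :
    Nat.card (AddAction.fixedBy (Wd n) a) =
      Nat.card {u : List Bool // u.length = g ∧ 2 * u.count true = g} := by
  have hL : 0 < 2 * n := by have := NeZero.ne n; omega
  have hgdvd : g ∣ 2 * n := hg ▸ Nat.gcd_dvd_right _ _
  have hgjdvd : g ∣ a.val := hg ▸ Nat.gcd_dvd_left _ _
  have hgpos : 0 < g := hg ▸ Nat.gcd_pos_of_pos_right _ hL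
  have hgm : g * m = 2 * n := by rw [hm]; exact Nat.mul_div_cancel' hgdvd
  have hmg : m * g = 2 * n := by rw [Nat.mul_comm]; exact hgm
  have hmpos : 0 < m := by rw [hm]; exact Nat.div_pos (Nat.le_of_dvd hL hgdvd) hgpos
  have hmem : ∀ u : {u : List Bool // u.length = g ∧ 2 * u.count true = g},
      (List.replicate m u.1).flatten.length = 2 * n ∧
      (List.replicate m u.1).flatten.count true = n := by
    intro u
    constructor
    · rw [length_flatten_replicate, u.2.1]; omega
    · rw [count_flatten_replicate]
      have h2 := u.2.2
      have h4 : m * (2 * u.1.count true) = 2 * (m * u.1.count true) := by ring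
      have h5 : m * (2 * u.1.count true) = m * g := by rw [h2]
      omega
  have ffix : ∀ u : {u : List Bool // u.length = g ∧ 2 * u.count true = g},
      (List.replicate m u.1).flatten.rotate a.val = (List.replicate m u.1).flatten := by
    intro u
    obtain ⟨k, hk⟩ := hgjdvd
    have hbase : (List.replicate m u.1).flatten.rotate g = (List.replicate m u.1).flatten := by
      have hb := rotate_flatten_replicate m u.1
      rwa [u.2.1] at hb
    rw [hk]
    exact rotate_fix_mul hbase k
  set f : {u : List Bool // u.length = g ∧ 2 * u.count true = g} →
      AddAction.fixedBy (Wd n) a :=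
    fun u => ⟨⟨(List.replicate m u.1).flatten, hmem u⟩, by
      refine AddAction.mem_fixedBy.2 ?_
      apply Subtype.ext
      refine (vadd_def _ _ _).trans ?_
      exact ffix u⟩ with hf
  have hinj : Function.Injective f := by
    intro u u' h
    have h1 : (List.replicate m u.1).flatten = (List.replicate m u'.1).flatten := by
      have := congrArg (fun x => x.1.1) h
      simpa [hf] using this
    apply Subtype.ext
    have h2 := congrArg (fun x => List.take g x) h1
    have h3 := take_flatten_replicate hmpos u.1
    have h3' := take_flatten_replicate hmpos u'.1
    rw [u.2.1] at h3
    rw [u'.2.1] at h3'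
    rw [h3, h3'] at h2
    exact h2
  have hsurj : Function.Surjective f := by
    rintro ⟨w, hw⟩
    rw [AddAction.mem_fixedBy] at hw
    have hfixl : w.1.rotate a.val = w.1 := by
      have := congrArg Subtype.val hw
      rwa [vadd_def] at this
    have hwlen : w.1.length = 2 * n := w.2.1
    have hwne : w.1 ≠ [] := by
      intro hcon
      rw [hcon] at hwlen
      simp at hwlen
      omega
    have hgcdlen : Nat.gcd a.val w.1.length = g := by rw [hwlen, hg]
    have hrotg : w.1.rotate g = w.1 := by
      have := rotate_fix_gcd hwne hfixl
      rwa [hgcdlen] at this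
    have hstruct : w.1 = (List.replicate m (w.1.take g)).flatten :=
      periodic_structure m w.1 g hgpos (by omega) hrotg
    have hglen : g ≤ w.1.length := by
      rw [hwlen]; exact Nat.le_of_dvd hL hgdvd
    have htlen : (w.1.take g).length = g := by rw [List.length_take]; omega
    have hcount : 2 * (w.1.take g).count true = g := by
      have h5 : w.1.count true = m * (w.1.take g).count true := by
        conv_lhs => rw [hstruct]
        exact count_flatten_replicate m _ true
      have h6 : w.1.count true = n := w.2.2
      have h8 : m * (2 * (w.1.take g).count true) = 2 * (m * (w.1.take g).count true) := by
        ring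
      have h9 : m * (2 * (w.1.take g).count true) = m * g := by omega
      exact Nat.eq_of_mul_eq_mul_left hmpos h9
    refine ⟨⟨w.1.take g, htlen, hcount⟩, ?_⟩
    apply Subtype.ext
    apply Subtype.ext
    show (List.replicate m (w.1.take g)).flatten = w.1
    exact hstruct.symm
  exact (Nat.card_congr (Equiv.ofBijective f ⟨hinj, hsurj⟩)).symm

lemma card_fixedBy (n : ℕ) [NeZero n] (a : ZMod (2 * n)) :
    Nat.card (AddAction.fixedBy (Wd n) a) =
      Nat.card {u : List Bool // u.length = Nat.gcd a.val (2 * n) ∧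
        2 * u.count true = Nat.gcd a.val (2 * n)} :=
  card_fixed_generic n a _ _ rfl rfl

/-! ### Counting -/

lemma finite_sub (g : ℕ) (p : List Bool → Prop) :
    Finite {u : List Bool // u.length = g ∧ p u} := by
  haveI : Fintype (List.Vector Bool g) := inferInstance
  haveI h1 : Finite (List.Vector Bool g) := Finite.of_fintype _
  haveI h2 : Finite {v : List.Vector Bool g // p v.1} := Subtype.finite
  have e : {v : List.Vector Bool g // p v.1} ≃ {u : List Bool // u.length = g ∧ p u} :=
    ⟨fun v => ⟨v.1.1, v.1.2, v.2⟩, fun u => ⟨⟨u.1, u.2.1⟩, u.2.2⟩,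
      fun v => rfl, fun u => rfl⟩
  exact Finite.of_equiv _ e

lemma headI_cons_tail {u : List Bool} (h : u ≠ []) : u.headI :: u.tail = u := by
  cases u
  · exact absurd rfl h
  · rfl

lemma count_head_tail (u : List Bool) (h : u ≠ []) :
    u.count true = u.tail.count true + (if u.headI = true then 1 else 0) := by
  cases u with
  | nil => exact absurd rfl h
  | cons b t => cases b <;> simp [List.count_cons]

lemma card_len_count : ∀ g c : ℕ,
    Nat.card {u : List Bool // u.length = g ∧ u.count true = c} = g.choose c := by
  intro g
  induction g with
  | zero =>
    intro c
    cases c with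
    | zero =>
      haveI : Unique {u : List Bool // u.length = 0 ∧ u.count true = 0} :=
        { default := ⟨[], by simp⟩
          uniq := by
            rintro ⟨u, hu, _⟩
            exact Subtype.ext (List.eq_nil_of_length_eq_zero hu) }
      exact Nat.card_unique
    | succ c =>
      haveI : IsEmpty {u : List Bool // u.length = 0 ∧ u.count true = c + 1} := by
        refine ⟨fun u => ?_⟩
        obtain ⟨u, hu, hc⟩ := u
        rw [List.eq_nil_of_length_eq_zero hu] at hc
        simp at hc
      rw [Nat.card_of_isEmpty, Nat.choose_zero_succ]
  | succ g ih =>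
    intro c
    cases c with
    | zero =>
      have e : {u : List Bool // u.length = g + 1 ∧ u.count true = 0} ≃
          {v : List Bool // v.length = g ∧ v.count true = 0} :=
        { toFun := fun u => ⟨u.1.tail, by
            refine ⟨by simp [List.length_tail, u.2.1], ?_⟩
            have h1 := (List.tail_sublist u.1).count_le true
            have h2 := u.2.2
            omega⟩
          invFun := fun v => ⟨false :: v.1, by simp [v.2.1, List.count_cons, v.2.2]⟩
          left_inv := by
            rintro ⟨u, hu, hc⟩
            apply Subtype.ext
            show false :: u.tail = u
            have hne : u ≠ [] := by intro h; rw [h] at hu; simp at hu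
            have hh : u.headI = false := by
              rcases hfb : u.headI with _ | _
              · rfl
              · rw [count_head_tail u hne, hfb] at hc; simp at hc
            rw [← hh, headI_cons_tail hne]
          right_inv := by
            rintro ⟨v, hv, hc⟩
            apply Subtype.ext
            rfl }
      rw [Nat.card_congr e, ih 0]
      simp
    | succ c =>
      haveI f1 := finite_sub g (fun u => u.count true = c)
      haveI f2 := finite_sub g (fun u => u.count true = c + 1)
      have e : {u : List Bool // u.length = g + 1 ∧ u.count true = c + 1} ≃
          {v : List Bool // v.length = g ∧ v.count true = c} ⊕
          {v : List Bool // v.length = g ∧ v.count true = c + 1} :=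
        { toFun := fun u =>
            if h : u.1.headI = true then
              Sum.inl ⟨u.1.tail, by
                refine ⟨by simp [List.length_tail, u.2.1], ?_⟩
                have hne : u.1 ≠ [] := by
                  intro hh; have := u.2.1; rw [hh] at this; simp at this
                have hct := count_head_tail u.1 hne
                rw [if_pos h] at hct
                have h2 := u.2.2
                omega⟩
            else
              Sum.inr ⟨u.1.tail, by
                refine ⟨by simp [List.length_tail, u.2.1], ?_⟩
                have hne : u.1 ≠ [] := by
                  intro hh; have := u.2.1; rw [hh] at this; simp at this
                have hct := count_head_tail u.1 hne
                rw [if_neg h] at hct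
                have h2 := u.2.2
                omega⟩
          invFun := fun x =>
            match x with
            | Sum.inl v => ⟨true :: v.1, by simp [v.2.1, List.count_cons, v.2.2]⟩
            | Sum.inr v => ⟨false :: v.1, by simp [v.2.1, List.count_cons, v.2.2]⟩
          left_inv := by
            rintro ⟨u, hu, hc⟩
            have hne : u ≠ [] := by intro hh; rw [hh] at hu; simp at hu
            dsimp only
            by_cases h : u.headI = true
            · rw [dif_pos h]
              apply Subtype.ext
              show true :: u.tail = u
              rw [← h, headI_cons_tail hne]
            · rw [dif_neg h]
              have h2 : u.headI = false := by revert h; cases u.headI <;> simp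
              apply Subtype.ext
              show false :: u.tail = u
              rw [← h2, headI_cons_tail hne]
          right_inv := by
            rintro (v | v)
            · dsimp only
              rw [dif_pos (show ((true :: (v.1 : List Bool)).headI = true) from rfl)]
              exact congrArg Sum.inl (Subtype.ext rfl)
            · dsimp only
              rw [dif_neg (show ¬((false :: (v.1 : List Bool)).headI = true) by simp)]
              exact congrArg Sum.inr (Subtype.ext rfl) }
      rw [Nat.card_congr e, Nat.card_sum, ih c, ih (c + 1), Nat.choose_succ_succ]

lemma card_u (g : ℕ) :
    Nat.card {u : List Bool // u.length = g ∧ 2 * u.count true = g} =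
      if 2 ∣ g then g.choose (g / 2) else 0 := by
  split_ifs with h
  · have e : {u : List Bool // u.length = g ∧ 2 * u.count true = g} ≃
        {u : List Bool // u.length = g ∧ u.count true = g / 2} := by
      apply Equiv.subtypeEquivRight
      intro u
      obtain ⟨k, rfl⟩ := h
      omega
    rw [Nat.card_congr e, card_len_count]
  · haveI : IsEmpty {u : List Bool // u.length = g ∧ 2 * u.count true = g} := by
      refine ⟨fun u => ?_⟩
      obtain ⟨u, hu, hc⟩ := u
      exact h ⟨u.count true, hc.symm⟩
    simp [Nat.card_of_isEmpty]

lemma card_gcd_eq (L d : ℕ) (hL : 0 < L) (hd : d ∣ L) (hdpos : 0 < d) :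
    ((Finset.range L).filter (fun i => Nat.gcd i L = d)).card = Nat.totient (L / d) := by
  rw [Nat.totient_eq_card_coprime]
  apply Finset.card_bij' (fun i _ => i / d) (fun m _ => d * m)
  · intro i hi
    simp only [Finset.mem_filter, Finset.mem_range] at hi
    obtain ⟨hilt, higcd⟩ := hi
    simp only [Finset.mem_filter, Finset.mem_range]
    constructor
    · exact Nat.div_lt_div_of_lt_of_dvd hd hilt
    · have := Nat.coprime_div_gcd_div_gcd (m := i) (n := L) (by rw [higcd]; exact hdpos)
      rw [higcd] at this
      exact this.symm
  · intro m hm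
    simp only [Finset.mem_filter, Finset.mem_range] at hm
    obtain ⟨hmlt, hmcop⟩ := hm
    simp only [Finset.mem_filter, Finset.mem_range]
    have hLdd : d * (L / d) = L := Nat.mul_div_cancel' hd
    constructor
    · calc d * m < d * (L / d) := by
            exact mul_lt_mul_of_pos_left hmlt hdpos
        _ = L := hLdd
    · conv_lhs => rw [← hLdd]
      rw [Nat.gcd_mul_left]
      have : Nat.gcd m (L / d) = 1 := Nat.Coprime.gcd_eq_one hmcop.symm
      rw [this, Nat.mul_one]
  · intro i hi
    simp only [Finset.mem_filter, Finset.mem_range] at hi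
    exact Nat.mul_div_cancel' (hi.2 ▸ Nat.gcd_dvd_left i L)
  · intro m _
    exact Nat.mul_div_cancel_left m hdpos

lemma sum_reindex (L : ℕ) (hL : 0 < L) (Q : ℕ → ℕ) :
    ∑ i ∈ Finset.range L, Q (Nat.gcd i L) =
      ∑ d ∈ L.divisors, Nat.totient (L / d) * Q d := by
  classical
  have hmaps : ∀ i ∈ Finset.range L, Nat.gcd i L ∈ L.divisors := by
    intro i _
    rw [Nat.mem_divisors]
    exact ⟨Nat.gcd_dvd_right _ _, hL.ne'⟩
  rw [← Finset.sum_fiberwise_of_maps_to hmaps (fun i => Q (Nat.gcd i L))]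
  apply Finset.sum_congr rfl
  intro d hd
  rw [Nat.mem_divisors] at hd
  have hdpos : 0 < d := Nat.pos_of_mem_divisors (Nat.mem_divisors.2 hd)
  calc ∑ i ∈ (Finset.range L).filter (fun i => Nat.gcd i L = d), Q (Nat.gcd i L)
      = ∑ i ∈ (Finset.range L).filter (fun i => Nat.gcd i L = d), Q d := by
        apply Finset.sum_congr rfl
        intro i hi
        rw [Finset.mem_filter] at hi
        rw [hi.2]
    _ = ((Finset.range L).filter (fun i => Nat.gcd i L = d)).card * Q d := by
        rw [Finset.sum_const, smul_eq_mul]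
    _ = Nat.totient (L / d) * Q d := by rw [card_gcd_eq L d hL hd.1 hdpos]

lemma sum_even_divisors (n : ℕ) (hn : 0 < n) :
    (∑ d ∈ (2 * n).divisors, Nat.totient (2 * n / d) *
      (if 2 ∣ d then d.choose (d / 2) else 0)) =
    ∑ d ∈ n.divisors, Nat.totient (n / d) * Nat.choose (2 * d) d := by
  classical
  rw [← Finset.sum_filter_add_sum_filter_not ((2*n).divisors) (fun d => 2 ∣ d)]
  have h2 : ∑ d ∈ (2*n).divisors.filter (fun d => ¬ 2 ∣ d),
      Nat.totient (2 * n / d) * (if 2 ∣ d then d.choose (d / 2) else 0) = 0 := by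
    apply Finset.sum_eq_zero
    intro d hd
    rw [Finset.mem_filter] at hd
    rw [if_neg hd.2, Nat.mul_zero]
  rw [h2, Nat.add_zero]
  refine Finset.sum_bij' (fun d _ => d / 2) (fun e _ => 2 * e) ?hi ?hj ?li ?ri ?val
  case hi =>
    intro d hd
    try dsimp only
    have h1 := Finset.mem_filter.1 hd
    have hdvd := (Nat.mem_divisors.1 h1.1).1
    obtain ⟨k, rfl⟩ := h1.2
    rw [Nat.mem_divisors]
    have h5 : (2 * k) / 2 = k := by omega
    rw [h5]
    exact ⟨(Nat.mul_dvd_mul_iff_left (by norm_num : 0 < 2)).1 hdvd, hn.ne'⟩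
  case hj =>
    intro e he
    have h1 := Nat.mem_divisors.1 he
    rw [Finset.mem_filter, Nat.mem_divisors]
    exact ⟨⟨Nat.mul_dvd_mul_left 2 h1.1, by omega⟩, ⟨e, rfl⟩⟩
  case li =>
    intro d hd
    try dsimp only
    have h1 := Finset.mem_filter.1 hd
    obtain ⟨k, rfl⟩ := h1.2
    omega
  case ri =>
    intro e _
    try dsimp only
    omega
  case val =>
    intro d hd
    try dsimp only
    have h1 := Finset.mem_filter.1 hd
    obtain ⟨k, rfl⟩ := h1.2
    rw [if_pos ⟨k, rfl⟩]
    have h3 : 2 * n / (2 * k) = n / k := Nat.mul_div_mul_left n k (by norm_num)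
    have h4 : 2 * k / 2 = k := by omega
    rw [h3, h4]

lemma numLeaves_pos (t : FullBinTree) : 1 ≤ t.numLeaves := by
  induction t with
  | leaf => exact le_refl 1
  | node l r ihl ihr => simp [FullBinTree.numLeaves]; omega

lemma length_le_sum (F : List FullBinTree) : F.length ≤ (F.map FullBinTree.numLeaves).sum := by
  induction F with
  | nil => simp
  | cons t G ih =>
    simp only [List.length_cons, List.map_cons, List.sum_cons]
    have := numLeaves_pos t
    omega

lemma zmod_sum (L : ℕ) [NeZero L] (f : ℕ → ℕ) :
    ∑ a : ZMod L, f (ZMod.val a) = ∑ i ∈ Finset.range L, f i := by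
  refine Finset.sum_bij' (fun a _ => ZMod.val a) (fun i _ => (i : ZMod L)) ?hi ?hj ?li ?ri ?val
  case hi => intro a _; exact Finset.mem_range.2 (ZMod.val_lt a)
  case hj => intro i _; exact Finset.mem_univ _
  case li => intro a _; exact ZMod.natCast_rightInverse a
  case ri => intro i hi; exact ZMod.val_cast_of_lt (Finset.mem_range.1 hi)
  case val => intro a _; rfl

def Qfun (d : ℕ) : ℕ := if 2 ∣ d then d.choose (d / 2) else 0

end Stmt10

/-- Two ordered forests of full binary plane trees with `n` total leaves are in the
same orbit of the rotation action of `Z/n` if one is obtained from the other by a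
cyclic rotation. -/
def ForestRotRel (n : ℕ)
    (l l' : {l : List FullBinTree //
      l ≠ [] ∧ (l.map FullBinTree.numLeaves).sum = n}) : Prop :=
  ∃ k : ZMod n, l'.1 = l.1.rotate k.val

namespace Stmt10

def Fo (n : ℕ) : Type := {l : List FullBinTree //
  l ≠ [] ∧ (l.map FullBinTree.numLeaves).sum = n}

def Phi (n : ℕ) (F : Fo n) : Wd n :=
  ⟨fenc F.1, by rw [length_fenc, F.2.2], by rw [count_true_fenc, F.2.2]⟩

lemma count_false_of_wd {n : ℕ} (w : Wd n) : w.1.count false = n := by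
  have h1 := count_true_add_count_false w.1
  have h2 := w.2.1
  have h3 := w.2.2
  omega

lemma bal_of_wd {n : ℕ} (w : Wd n) : bal w.1 = 0 := by
  have h1 := count_false_of_wd w
  have h2 := w.2.2
  simp [bal, h1, h2]

variable (n : ℕ) [NeZero n]

lemma phi_sound : ∀ F F' : Fo n, ForestRotRel n F F' →
    (⟦Phi n F⟧ : Quotient (AddAction.orbitRel (ZMod (2 * n)) (Wd n))) = ⟦Phi n F'⟧ := by
  intro F F' ⟨k, hk⟩
  have hFlenpos : 0 < F.1.length := List.length_pos_iff.2 F.2.1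
  set c := k.val % F.1.length with hc
  have hcle : c ≤ F.1.length := (Nat.mod_lt _ hFlenpos).le
  have hrot : F'.1 = F.1.rotate c := by rw [hk, hc, List.rotate_mod]
  set j := (fenc (F.1.take c)).length with hj
  have hfr : fenc F'.1 = (fenc F.1).rotate j := by
    rw [hrot]; exact fenc_rotate F.1 c hcle
  set a : ZMod (2 * n) := (j : ZMod (2 * n)) with ha
  have haval : (fenc F.1).rotate a.val = (fenc F.1).rotate j := by
    rw [ha, ZMod.val_natCast]
    have hlen : (fenc F.1).length = 2 * n := (Phi n F).2.1
    rw [← hlen]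
    exact List.rotate_mod _ _
  have hvadd : a +ᵥ Phi n F = Phi n F' := by
    apply Subtype.ext
    rw [vadd_def]
    show (fenc F.1).rotate a.val = fenc F'.1
    rw [haval, hfr]
  apply Quotient.sound
  apply (AddAction.orbitRel (ZMod (2 * n)) (Wd n)).symm
  exact ⟨a, hvadd⟩

def qmap : Quot (ForestRotRel n) → Quotient (AddAction.orbitRel (ZMod (2 * n)) (Wd n)) :=
  Quot.lift (fun F => ⟦Phi n F⟧) (phi_sound n)

lemma qmap_surj : Function.Surjective (qmap n) := by
  intro x
  induction x using Quotient.ind with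
  | _ w =>
  have hbal : bal w.1 = 0 := bal_of_wd w
  obtain ⟨j, hjle, hdyck⟩ := exists_rotate_dyck hbal
  set w' := w.1.rotate j with hw'
  have hperm := List.rotate_perm w.1 j
  have hlen' : w'.length = 2 * n := by rw [hw', List.length_rotate, w.2.1]
  have hcnt' : w'.count true = n := by rw [hw', hperm.count_eq, w.2.2]
  have hbal' : bal w' = 0 := by
    have : w'.count false = w.1.count false := hperm.count_eq false
    simp [bal, hcnt', this, count_false_of_wd w]
  have hne' : w' ≠ [] := by
    intro h
    rw [h] at hlen'
    have := NeZero.ne n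
    simp at hlen'
    omega
  obtain ⟨F, hFne, hFenc⟩ := fenc_surj_aux w'.length w' le_rfl hdyck hbal' hne'
  have hFsum : (F.map FullBinTree.numLeaves).sum = n := by
    rw [← count_true_fenc, hFenc, hcnt']
  refine ⟨Quot.mk _ ⟨F, hFne, hFsum⟩, ?_⟩
  show (⟦Phi n ⟨F, hFne, hFsum⟩⟧ : Quotient (AddAction.orbitRel (ZMod (2 * n)) (Wd n))) = ⟦w⟧
  apply Quotient.sound
  set a : ZMod (2 * n) := (j : ZMod (2 * n)) with ha
  have hvadd : a +ᵥ w = Phi n ⟨F, hFne, hFsum⟩ := by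
    apply Subtype.ext
    rw [vadd_def]
    show w.1.rotate a.val = fenc F
    have hmod := List.rotate_mod w.1 j
    rw [w.2.1] at hmod
    rw [hFenc, ha, ZMod.val_natCast]
    exact hmod
  exact ⟨a, hvadd⟩

lemma qmap_inj : Function.Injective (qmap n) := by
  intro x y
  induction x using Quot.ind with
  | _ F =>
  induction y using Quot.ind with
  | _ G =>
  intro h
  have hrel := Quotient.exact h
  obtain ⟨a, ha⟩ := hrel
  -- a +ᵥ Phi n G = Phi n F
  have hlist : (fenc G.1).rotate a.val = fenc F.1 := by
    have := congrArg Subtype.val ha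
    rwa [vadd_def] at this
  have hglen : (fenc G.1).length = 2 * n := (Phi n G).2.1
  have havle : a.val ≤ (fenc G.1).length := by rw [hglen]; exact (ZMod.val_lt a).le
  have hgd : Dyck (fenc G.1) := dyck_fenc G.1
  have hgb : bal (fenc G.1) = 0 := bal_fenc G.1
  have hrd : Dyck ((fenc G.1).rotate a.val) := by rw [hlist]; exact dyck_fenc F.1
  have htb : bal ((fenc G.1).take a.val) = 0 := bal_take_of_rotate_dyck hgd hgb havle hrd
  obtain ⟨c, hcle, hcb⟩ := boundary G.1 a.val havle htb
  have hfr : fenc (G.1.rotate c) = (fenc G.1).rotate a.val := by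
    rw [fenc_rotate G.1 c hcle, hcb]
  have hFG : G.1.rotate c = F.1 := fenc_inj _ _ (by rw [hfr, hlist])
  have hlen_le : G.1.length ≤ n := by
    have := length_le_sum G.1
    rw [G.2.2] at this
    exact this
  have hrel2 : ForestRotRel n G F := by
    refine ⟨(c : ZMod n), ?_⟩
    rw [ZMod.val_natCast]
    rcases Nat.lt_or_ge c n with hlt | hge
    · rw [Nat.mod_eq_of_lt hlt, hFG]
    · have hceq : c = n := by omega
      have hgeq : G.1.length = n := by omega
      have hrl : (G.1 : List FullBinTree).rotate n = G.1 := by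
        have h9 := List.rotate_length (G.1 : List FullBinTree)
        rwa [hgeq] at h9
      rw [hceq, Nat.mod_self, List.rotate_zero]
      rw [hceq] at hFG
      exact (hFG.symm).trans hrl
  exact (Quot.sound hrel2).symm

end Stmt10

/-- the number of orbits of the cyclic group `Z/n` acting by rotation
on ordered forests of full binary plane trees with `n` total leaves equals
`(1/(2n)) Σ_{d|n} φ(n/d) C(2d,d)`. -/
theorem stmt_10 (n : ℕ) (hn : 0 < n) :
    Nat.card (Quot (ForestRotRel n)) =
      (∑ d ∈ n.divisors, Nat.totient (n / d) * Nat.choose (2 * d) d) / (2 * n) := by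
  classical
  haveI : NeZero n := ⟨hn.ne'⟩
  haveI hfinW : Finite (Stmt10.Wd n) := Stmt10.finite_sub (2 * n) (fun w => w.count true = n)
  haveI : Fintype (Stmt10.Wd n) := Fintype.ofFinite _
  haveI : ∀ a : ZMod (2 * n), Fintype (AddAction.fixedBy (Stmt10.Wd n) a) :=
    fun a => Fintype.ofFinite _
  haveI : Fintype (Quotient (AddAction.orbitRel (ZMod (2 * n)) (Stmt10.Wd n))) :=
    Fintype.ofFinite _
  have hburn := AddAction.sum_card_fixedBy_eq_card_orbits_mul_card_addGroup
    (ZMod (2 * n)) (Stmt10.Wd n)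
  rw [ZMod.card (2 * n)] at hburn
  have hstep : ∑ a : ZMod (2 * n), Fintype.card (AddAction.fixedBy (Stmt10.Wd n) a)
      = ∑ d ∈ n.divisors, Nat.totient (n / d) * Nat.choose (2 * d) d := by
    have h1 : ∀ a : ZMod (2 * n), Fintype.card (AddAction.fixedBy (Stmt10.Wd n) a)
        = Stmt10.Qfun (Nat.gcd (ZMod.val a) (2 * n)) := by
      intro a
      rw [← Nat.card_eq_fintype_card, Stmt10.card_fixedBy n a, Stmt10.card_u]
      rfl
    rw [Finset.sum_congr rfl (fun a _ => h1 a)]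
    have hz : (∑ a : ZMod (2 * n), Stmt10.Qfun (Nat.gcd (ZMod.val a) (2 * n)))
        = ∑ i ∈ Finset.range (2 * n), Stmt10.Qfun (Nat.gcd i (2 * n)) :=
      Stmt10.zmod_sum (2 * n) (fun i => Stmt10.Qfun (Nat.gcd i (2 * n)))
    rw [hz]
    have hr := Stmt10.sum_reindex (2 * n) (by omega) Stmt10.Qfun
    rw [hr]
    have he := Stmt10.sum_even_divisors n hn
    calc ∑ d ∈ (2 * n).divisors, Nat.totient (2 * n / d) * Stmt10.Qfun d
        = ∑ d ∈ (2 * n).divisors, Nat.totient (2 * n / d) *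
            (if 2 ∣ d then d.choose (d / 2) else 0) := rfl
      _ = ∑ d ∈ n.divisors, Nat.totient (n / d) * Nat.choose (2 * d) d := he
  rw [hstep] at hburn
  have hcard : Nat.card (Quot (ForestRotRel n))
      = Fintype.card (Quotient (AddAction.orbitRel (ZMod (2 * n)) (Stmt10.Wd n))) := by
    rw [← Nat.card_eq_fintype_card]
    exact Nat.card_congr (Equiv.ofBijective (Stmt10.qmap n)
      ⟨Stmt10.qmap_inj n, Stmt10.qmap_surj n⟩)
  rw [hcard, hburn, Nat.mul_div_cancel _ (by omega : 0 < 2 * n)]
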